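/- arXiv:1304.3311 — 3 statements merged into one kernel-verified Lean document; each statement's English description precedes it below -/
import Mathlib

section
/- Let p > 5 be prime and H ⊆ GL₂(F̄ₚ) a finite absolutely irreducible subgroup of order prime to p, with Z its group of scalar elements. Suppose H contains an element γ whose image in H/Z generates a cyclic subgroup of order greater than 5. Then H/Z is a dihedral group (i.e., not isomorphic to S₄, A₄, or A₅, and not cyclic). -/
open Matrix

set_option maxRecDepth 10000 in
private lemma perm4_pow : ∀ σ : Equiv.Perm (Fin 4), σ^4 = 1 ∨ σ^3 = 1 := by decide

private lemma alt4_pow : ∀ σ : alternatingGroup (Fin 4), σ^3 = 1 ∨ σ^2 = 1 := by decide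

set_option maxRecDepth 10000 in
private lemma alt5_pow : ∀ σ : alternatingGroup (Fin 5), σ^5 = 1 ∨ σ^3 = 1 ∨ σ^2 = 1 := by
  decide

private lemma perm4_orderOf (σ : Equiv.Perm (Fin 4)) : orderOf σ ≤ 5 := by
  rcases perm4_pow σ with h | h
  · exact (Nat.le_of_dvd (by norm_num) (orderOf_dvd_of_pow_eq_one h)).trans (by norm_num)
  · exact (Nat.le_of_dvd (by norm_num) (orderOf_dvd_of_pow_eq_one h)).trans (by norm_num)

private lemma alt4_orderOf (σ : alternatingGroup (Fin 4)) : orderOf σ ≤ 5 := by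
  rcases alt4_pow σ with h | h
  · exact (Nat.le_of_dvd (by norm_num) (orderOf_dvd_of_pow_eq_one h)).trans (by norm_num)
  · exact (Nat.le_of_dvd (by norm_num) (orderOf_dvd_of_pow_eq_one h)).trans (by norm_num)

private lemma alt5_orderOf (σ : alternatingGroup (Fin 5)) : orderOf σ ≤ 5 := by
  rcases alt5_pow σ with h | h | h
  · exact Nat.le_of_dvd (by norm_num) (orderOf_dvd_of_pow_eq_one h)
  · exact (Nat.le_of_dvd (by norm_num) (orderOf_dvd_of_pow_eq_one h)).trans (by norm_num)
  · exact (Nat.le_of_dvd (by norm_num) (orderOf_dvd_of_pow_eq_one h)).trans (by norm_num)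


/-- Let `p > 5` be prime and `H ⊆ GL₂(F̄ₚ)` a finite absolutely irreducible
subgroup of order prime to `p`, containing an element `γ` whose image in `H/Z ⊆ PGL₂(F̄ₚ)`
generates a cyclic subgroup of order `> 5`. Then `H/Z` is dihedral: it is not cyclic and not
isomorphic to `S₄`, `A₄` or `A₅`. -/
theorem stmt4 (p : ℕ) [Fact p.Prime] (hp : 5 < p)
    (H : Subgroup (GL (Fin 2) (AlgebraicClosure (ZMod p)))) [Finite H]
    (hirr : ∀ W : Submodule (AlgebraicClosure (ZMod p)) (Fin 2 → AlgebraicClosure (ZMod p)),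
      (∀ g ∈ H, ∀ x ∈ W,
        (g : Matrix (Fin 2) (Fin 2) (AlgebraicClosure (ZMod p))) *ᵥ x ∈ W) →
      W = ⊥ ∨ W = ⊤)
    (hcop : (Nat.card H).Coprime p)
    (γ : GL (Fin 2) (AlgebraicClosure (ZMod p))) (hγ : γ ∈ H)
    (hord : 5 < orderOf (QuotientGroup.mk'
      (Subgroup.center (GL (Fin 2) (AlgebraicClosure (ZMod p)))) γ)) :
    ¬ IsCyclic (H.map (QuotientGroup.mk'
        (Subgroup.center (GL (Fin 2) (AlgebraicClosure (ZMod p)))))) ∧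
    ¬ Nonempty ((H.map (QuotientGroup.mk'
        (Subgroup.center (GL (Fin 2) (AlgebraicClosure (ZMod p)))))) ≃* Equiv.Perm (Fin 4)) ∧
    ¬ Nonempty ((H.map (QuotientGroup.mk'
        (Subgroup.center (GL (Fin 2) (AlgebraicClosure (ZMod p)))))) ≃*
          alternatingGroup (Fin 4)) ∧
    ¬ Nonempty ((H.map (QuotientGroup.mk'
        (Subgroup.center (GL (Fin 2) (AlgebraicClosure (ZMod p)))))) ≃*
          alternatingGroup (Fin 5)) := by
  set F := AlgebraicClosure (ZMod p)
  set mk' := QuotientGroup.mk' (Subgroup.center (GL (Fin 2) F)) with hmk'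
  -- the element of the image subgroup coming from γ
  have hγmem : mk' γ ∈ H.map mk' := ⟨γ, hγ, rfl⟩
  set γ' : ↥(H.map mk') := ⟨mk' γ, hγmem⟩ with hγ'
  have hordγ' : 5 < orderOf γ' := by
    rwa [hγ', Subgroup.orderOf_mk]
  refine ⟨?_, ?_, ?_, ?_⟩
  · -- not cyclic
    intro hcyc
    -- H is commutative
    have hcomm : ∀ a b : ↥H, a * b = b * a := by
      refine commutative_of_cyclic_center_quotient
        ((mk'.comp H.subtype).codRestrict (H.map mk')
          (fun a => ⟨a.1, a.2, rfl⟩)) ?_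
      intro a ha
      rw [MonoidHom.mem_ker] at ha
      have ha' : mk' (a : GL (Fin 2) F) = 1 := congrArg Subtype.val ha
      have hc : (a : GL (Fin 2) F) ∈ Subgroup.center (GL (Fin 2) F) := by
        rwa [← QuotientGroup.ker_mk' (Subgroup.center (GL (Fin 2) F)), MonoidHom.mem_ker]
      rw [Subgroup.mem_center_iff] at hc ⊢
      intro b
      exact Subtype.ext (hc b)
    -- γ has an eigenvalue
    have hM : ∃ c : F, Module.End.HasEigenvalue
        (Matrix.mulVecLin (γ : Matrix (Fin 2) (Fin 2) F)) c :=
      Module.End.exists_eigenvalue _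
    obtain ⟨c, hc⟩ := hM
    set W := Module.End.eigenspace (Matrix.mulVecLin (γ : Matrix (Fin 2) (Fin 2) F)) c with hW
    have hWne : W ≠ ⊥ := hc
    have hWinv : ∀ g ∈ H, ∀ x ∈ W, (g : Matrix (Fin 2) (Fin 2) F) *ᵥ x ∈ W := by
      intro g hg x hx
      rw [hW, Module.End.mem_eigenspace_iff] at hx ⊢
      have hcommg : (γ : Matrix (Fin 2) (Fin 2) F) * (g : Matrix (Fin 2) (Fin 2) F)
          = (g : Matrix (Fin 2) (Fin 2) F) * (γ : Matrix (Fin 2) (Fin 2) F) := by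
        have := hcomm ⟨γ, hγ⟩ ⟨g, hg⟩
        have := congrArg (Subtype.val) this
        have := congrArg (Units.val) this
        simpa using this
      simp only [Matrix.mulVecLin_apply] at hx ⊢
      rw [Matrix.mulVec_mulVec, hcommg, ← Matrix.mulVec_mulVec, hx, Matrix.mulVec_smul]
    have hWtop : W = ⊤ := (hirr W hWinv).resolve_left hWne
    -- hence γ is scalar
    have hsc : (γ : Matrix (Fin 2) (Fin 2) F) = c • (1 : Matrix (Fin 2) (Fin 2) F) := by
      have hact : ∀ x : Fin 2 → F, (γ : Matrix (Fin 2) (Fin 2) F) *ᵥ x = c • x := by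
        intro x
        have : x ∈ W := hWtop ▸ Submodule.mem_top
        rw [hW, Module.End.mem_eigenspace_iff] at this
        simpa [Matrix.mulVecLin_apply] using this
      ext i j
      have h := congrFun (hact (Pi.single j 1)) i
      rw [Matrix.mulVec_single] at h
      simp only [MulOpposite.op_one, one_smul, Matrix.col_apply] at h
      rw [h]
      simp [Pi.single_apply, Matrix.one_apply]
    -- so γ is central and has order 1 in the quotient, contradiction
    have hcen : γ ∈ Subgroup.center (GL (Fin 2) F) := by
      rw [Subgroup.mem_center_iff]
      intro g
      ext : 1
      show (g : Matrix (Fin 2) (Fin 2) F) * (γ : Matrix (Fin 2) (Fin 2) F)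
        = (γ : Matrix (Fin 2) (Fin 2) F) * (g : Matrix (Fin 2) (Fin 2) F)
      rw [hsc]
      simp [Matrix.mul_smul, Matrix.smul_mul]
    have : mk' γ = 1 := by
      rw [← MonoidHom.mem_ker, QuotientGroup.ker_mk']
      exact hcen
    have : orderOf γ' = 1 := by
      rw [hγ', Subgroup.orderOf_mk, this, orderOf_one]
    omega
  · rintro ⟨e⟩
    have := perm4_orderOf (e γ')
    rw [MulEquiv.orderOf_eq] at this
    omega
  · rintro ⟨e⟩
    have := alt4_orderOf (e γ')
    rw [MulEquiv.orderOf_eq] at this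
    omega
  · rintro ⟨e⟩
    have := alt5_orderOf (e γ')
    rw [MulEquiv.orderOf_eq] at this
    omega
end

section
/- Let G be a dihedral subgroup of PGL₂(F̄ₚ) and suppose an element g ∈ G generates a cyclic subgroup of even order greater than 5. Then g lies in the maximal cyclic (rotation) subgroup of G, and the preimage in GL₂ of the center of G contains a scalar element of order two. -/
open Matrix

/-- Cayley–Hamilton for 2×2 matrices. -/
lemma chFin2 {R : Type*} [CommRing R] (A : Matrix (Fin 2) (Fin 2) R) :
    A * A = A.trace • A - A.det • (1 : Matrix (Fin 2) (Fin 2) R) := by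
  ext i j
  fin_cases i <;> fin_cases j <;>
    simp [Matrix.mul_apply, Fin.sum_univ_two, Matrix.trace_fin_two, Matrix.det_fin_two,
      Matrix.one_apply] <;> ring

/-- A scalar element of `GL` is central. -/
lemma scalar_mem_center {K : Type*} [Field K] {u : GL (Fin 2) K} {k : K}
    (h : (u : Matrix (Fin 2) (Fin 2) K) = k • 1) :
    u ∈ Subgroup.center (GL (Fin 2) K) := by
  rw [Subgroup.mem_center_iff]
  intro v
  apply Units.ext
  rw [Units.val_mul, Units.val_mul, h]
  rw [Matrix.mul_smul, Matrix.smul_mul, mul_one, one_mul]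

/-- A central element of `GL` is scalar. -/
lemma center_scalar {K : Type*} [Field K] {u : GL (Fin 2) K}
    (h : u ∈ Subgroup.center (GL (Fin 2) K)) :
    ∃ k : K, (u : Matrix (Fin 2) (Fin 2) K) = k • 1 := by
  rw [Subgroup.mem_center_iff] at h
  have hc : ∀ (i j : Fin 2), i ≠ j →
      Commute (single i j (1 : K)) (u : Matrix (Fin 2) (Fin 2) K) := by
    intro i j hij
    set E := single i j (1 : K) with hE
    have hE2 : E * E = 0 := by
      rw [hE, single_mul_single_of_ne]
      exact fun hji => hij (hji.symm)
    have hv : (1 + E) * (1 - E) = 1 := by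
      rw [mul_sub, add_mul, add_mul, hE2]; simp
    have hv' : (1 - E) * (1 + E) = 1 := by
      rw [sub_mul, mul_add, mul_add, hE2]; simp
    have h2 := h ⟨1 + E, 1 - E, hv, hv'⟩
    have hval : (1 + E) * (u : Matrix (Fin 2) (Fin 2) K)
        = (u : Matrix (Fin 2) (Fin 2) K) * (1 + E) := by
      have h3 := congrArg Units.val h2
      simpa using h3
    have h4 : E * (u : Matrix (Fin 2) (Fin 2) K) = (u : Matrix (Fin 2) (Fin 2) K) * E := by
      rw [add_mul, mul_add, one_mul, mul_one] at hval
      exact add_left_cancel hval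
    exact h4
  obtain ⟨r, hr⟩ := mem_range_scalar_iff_commute_single.mpr hc
  refine ⟨r, ?_⟩
  rw [← hr]
  ext i j
  simp [Matrix.scalar_apply, Matrix.one_apply, Matrix.diagonal_apply]

/-- In characteristic 2, anything commuting with a nonzero square-zero 2×2 matrix
has scalar square. -/
lemma commNilp {K : Type*} [Field K] (h2 : (2 : K) = 0)
    {N x : Matrix (Fin 2) (Fin 2) K} (hN : N ≠ 0) (hN2 : N * N = 0)
    (hc : x * N = N * x) : ∃ κ : K, x * x = κ • 1 := by
  have hdet : N.det = 0 := by
    have h := congrArg Matrix.det hN2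
    rw [Matrix.det_mul] at h
    simp only [Matrix.det_zero] at h
    exact mul_self_eq_zero.mp h
  have htr : N.trace = 0 := by
    have hCH := chFin2 N
    rw [hN2, hdet, zero_smul, sub_zero] at hCH
    by_contra htr0
    apply hN
    have h := congrArg (fun m => (N.trace)⁻¹ • m) hCH.symm
    simpa [smul_smul, inv_mul_cancel₀ htr0] using h
  have htr' : N 0 0 + N 1 1 = 0 := by simpa [Matrix.trace_fin_two] using htr
  have hdet' : N 0 0 * N 1 1 - N 0 1 * N 1 0 = 0 := by simpa [Matrix.det_fin_two] using hdet
  have e01 := congrFun (congrFun hc 0) 1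
  have e10 := congrFun (congrFun hc 1) 0
  simp [Matrix.mul_apply, Fin.sum_univ_two] at e01 e10
  have hβ : N 0 1 * (x 0 0 - x 1 1) = 0 := by
    linear_combination e01 - x 0 1 * htr' + N 0 0 * x 0 1 * h2
  have hγ : N 1 0 * (x 0 0 - x 1 1) = 0 := by
    linear_combination -e10 + x 1 0 * htr' - N 1 1 * x 1 0 * h2
  by_cases hβ0 : N 0 1 = 0
  · by_cases hγ0 : N 1 0 = 0
    · exfalso
      apply hN
      have h00 : N 0 0 = 0 := by
        have : N 0 0 * N 0 0 = 0 := by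
          linear_combination N 0 0 * htr' + hdet' + N 1 0 * hβ0 - N 0 0 * N 1 1 * h2
        exact mul_self_eq_zero.mp this
      have h11 : N 1 1 = 0 := by linear_combination htr' - h00
      ext i j
      fin_cases i <;> fin_cases j <;> simp [h00, h11, hβ0, hγ0]
    · have hps : x 0 0 = x 1 1 := by
        have := mul_eq_zero.mp hγ
        rcases this with h | h
        · exact absurd h hγ0
        · linear_combination h
      refine ⟨x 0 0 * x 0 0 + x 0 1 * x 1 0, ?_⟩
      ext i j
      fin_cases i <;> fin_cases j <;>
        simp [Matrix.mul_apply, Fin.sum_univ_two, Matrix.one_apply]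
      · linear_combination x 0 1 * hps + x 0 1 * x 1 1 * h2
      · linear_combination x 1 0 * hps + x 1 0 * x 1 1 * h2
      · linear_combination (-(x 1 1) - x 0 0) * hps
  · have hps : x 0 0 = x 1 1 := by
      rcases mul_eq_zero.mp hβ with h | h
      · exact absurd h hβ0
      · linear_combination h
    refine ⟨x 0 0 * x 0 0 + x 0 1 * x 1 0, ?_⟩
    ext i j
    fin_cases i <;> fin_cases j <;>
      simp [Matrix.mul_apply, Fin.sum_univ_two, Matrix.one_apply]
    · linear_combination x 0 1 * hps + x 0 1 * x 1 1 * h2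
    · linear_combination x 1 0 * hps + x 1 0 * x 1 1 * h2
    · linear_combination (-(x 1 1) - x 0 0) * hps

lemma unit_inv_val_eq {M : Type*} [Monoid M] (u : Mˣ) (b : M) (h : ↑u * b = 1) :
    ((u⁻¹ : Mˣ) : M) = b := by
  calc ((u⁻¹ : Mˣ) : M) = ↑u⁻¹ * (↑u * b) := by rw [h, mul_one]
    _ = (↑u⁻¹ * ↑u) * b := by rw [mul_assoc]
    _ = b := by rw [u.inv_mul, one_mul]

set_option maxHeartbeats 2000000 in
/-- Let `G ≤ PGL₂(F̄ₚ)` be dihedral (a cyclic subgroup `C` of index 2 in `G`, every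
element of `G` outside `C` having order 2), and let `g ∈ G` generate a cyclic subgroup of even
order `> 5`.  Then `g` lies in the maximal cyclic subgroup `C`, and the preimage in `GL₂` of the
center of `G` contains a scalar element of order two (here `H` is a finite subgroup of `GL₂`
with image `G` in `PGL₂`, and the scalar element can be found in `H`). -/
theorem stmt5 (p : ℕ) [Fact p.Prime]
    (H : Subgroup (GL (Fin 2) (AlgebraicClosure (ZMod p)))) [Finite H]
    (G C : Subgroup ((GL (Fin 2) (AlgebraicClosure (ZMod p))) ⧸
      Subgroup.center (GL (Fin 2) (AlgebraicClosure (ZMod p)))))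
    (hHG : H.map (QuotientGroup.mk'
      (Subgroup.center (GL (Fin 2) (AlgebraicClosure (ZMod p))))) = G)
    (hCG : C ≤ G) (hCyc : IsCyclic C) (hidx : C.relIndex G = 2)
    (hout : ∀ x ∈ G, x ∉ C → orderOf x = 2)
    (g : (GL (Fin 2) (AlgebraicClosure (ZMod p))) ⧸
      Subgroup.center (GL (Fin 2) (AlgebraicClosure (ZMod p))))
    (hg : g ∈ G) (hgeven : Even (orderOf g)) (hgord : 5 < orderOf g) :
    g ∈ C ∧ ∃ z : GL (Fin 2) (AlgebraicClosure (ZMod p)),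
      z ∈ H ∧ z ∈ Subgroup.center (GL (Fin 2) (AlgebraicClosure (ZMod p))) ∧
      orderOf z = 2 ∧
      QuotientGroup.mk' (Subgroup.center (GL (Fin 2) (AlgebraicClosure (ZMod p)))) z ∈
        Subgroup.map G.subtype (Subgroup.center G) := by
  set K := AlgebraicClosure (ZMod p) with hKdef
  set π := QuotientGroup.mk' (Subgroup.center (GL (Fin 2) K)) with hπdef
  -- g lies in C
  have hgC : g ∈ C := by
    by_contra hgC
    have := hout g hg hgC
    omega
  refine ⟨hgC, ?_⟩
  obtain ⟨m, hm⟩ := hgeven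
  have hm3 : 3 ≤ m := by omega
  have hgm : g ^ m ≠ 1 := by
    intro h
    have h1 := Nat.le_of_dvd (by omega) (orderOf_dvd_of_pow_eq_one h)
    omega
  have hg2 : g ^ 2 ≠ 1 := by
    intro h
    have h1 := Nat.le_of_dvd (by omega) (orderOf_dvd_of_pow_eq_one h)
    omega
  -- a reflection
  obtain ⟨r, hrG, hrC⟩ : ∃ r ∈ G, r ∉ C := by
    by_contra hcon
    push_neg at hcon
    have htop : C.subgroupOf G = ⊤ := by
      rw [eq_top_iff]; intro x _; exact hcon x x.2
    rw [Subgroup.relIndex, htop, Subgroup.index_top] at hidx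
    omega
  have hrr : r * r = 1 := by
    have h1 := pow_orderOf_eq_one r
    rw [hout r hrG hrC] at h1
    simpa [pow_two] using h1
  have hrinv : r⁻¹ = r := by rw [inv_eq_iff_mul_eq_one]; exact hrr
  have hrgC : r * g ∉ C := by
    intro h
    exact hrC (by simpa using C.mul_mem h (C.inv_mem hgC))
  have hrg2 : (r * g) * (r * g) = 1 := by
    have h1 := pow_orderOf_eq_one (r * g)
    rw [hout (r * g) (G.mul_mem hrG hg) hrgC] at h1
    simpa [pow_two] using h1
  have hconj : r * g * r = g⁻¹ := by
    have h1 : (r * g * r) * g = 1 := by rw [← hrg2]; group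
    exact eq_inv_of_mul_eq_one_left h1
  -- lifts
  have hgH : g ∈ H.map π := by rw [hHG]; exact hg
  have hrH : r ∈ H.map π := by rw [hHG]; exact hrG
  obtain ⟨a, haH, hag⟩ := hgH
  obtain ⟨b, hbH, hbr⟩ := hrH
  have hker : ∀ x : GL (Fin 2) K, π x = 1 ↔ x ∈ Subgroup.center (GL (Fin 2) K) := by
    intro x
    exact QuotientGroup.eq_one_iff x
  -- the commutator scalar
  set w : GL (Fin 2) K := b * a * b⁻¹ * a with hwdef
  have hwH : w ∈ H := H.mul_mem (H.mul_mem (H.mul_mem hbH haH) (H.inv_mem hbH)) haH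
  have hwc : w ∈ Subgroup.center (GL (Fin 2) K) := by
    rw [← hker]
    rw [hwdef]
    simp only [_root_.map_mul, _root_.map_inv, hag, hbr]
    rw [hrinv, hconj, inv_mul_cancel]
  obtain ⟨ω, hω⟩ := center_scalar hwc
  -- matrix values
  set va : Matrix (Fin 2) (Fin 2) K := (a : Matrix (Fin 2) (Fin 2) K) with hvadef
  have hdet : IsUnit va.det := (Matrix.isUnit_iff_isUnit_det va).mp a.isUnit
  have hdne : va.det ≠ 0 := hdet.ne_zero
  -- inverse of a
  have hainv : ((a⁻¹ : GL (Fin 2) K) : Matrix (Fin 2) (Fin 2) K)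
      = (va.det)⁻¹ • (va.trace • 1 - va) := by
    apply unit_inv_val_eq
    have hCH := chFin2 va
    show va * (va.det⁻¹ • (va.trace • (1 : Matrix (Fin 2) (Fin 2) K) - va)) = 1
    rw [mul_smul_comm, mul_sub, mul_smul_comm, mul_one, hCH, sub_sub_cancel,
      smul_smul, inv_mul_cancel₀ hdne, one_smul]
  -- trace of a is nonzero
  have hπa2 : π (a ^ 2) = g ^ 2 := by rw [map_pow, hag]
  have hπam : π (a ^ m) = g ^ m := by rw [map_pow, hag]
  have htra : va.trace ≠ 0 := by
    intro htr0
    have hCH := chFin2 va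
    rw [htr0, zero_smul, zero_sub] at hCH
    have ha2 : ((a ^ 2 : GL (Fin 2) K) : Matrix (Fin 2) (Fin 2) K) = (-va.det) • 1 := by
      rw [Units.val_pow_eq_pow_val, pow_two, ← hvadef, hCH, neg_smul]
    exact hg2 (by rw [← hπa2, hker]; exact scalar_mem_center ha2)
  -- ω = det a
  have hbab : b * a * b⁻¹ = w * a⁻¹ := by rw [hwdef]; group
  have htr_eq : va.trace * va.det = ω * va.trace := by
    have h1 : ((b : Matrix (Fin 2) (Fin 2) K) * va) * ((b⁻¹ : GL (Fin 2) K) : _)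
        = (w : Matrix (Fin 2) (Fin 2) K) * ((a⁻¹ : GL (Fin 2) K) : _) := by
      have := congrArg (Units.val) hbab
      simpa [Units.val_mul] using this
    have h2 := congrArg Matrix.trace h1
    rw [Matrix.trace_mul_comm] at h2
    rw [← Matrix.mul_assoc, Units.inv_mul, Matrix.one_mul] at h2
    rw [hω, hainv, Matrix.smul_mul, Matrix.one_mul, Matrix.trace_smul, Matrix.trace_smul,
      Matrix.trace_sub, Matrix.trace_smul, Matrix.trace_one] at h2
    simp only [Fintype.card_fin, Nat.cast_ofNat, smul_eq_mul] at h2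
    linear_combination va.det * h2 + ω * va.trace * inv_mul_cancel₀ hdne
  have hωd : ω = va.det := mul_left_cancel₀ htra (by linear_combination -htr_eq)
  -- a ^ (m+m) is scalar
  have hπan : π (a ^ (m + m)) = 1 := by
    rw [map_pow, hag, ← hm]; exact pow_orderOf_eq_one g
  obtain ⟨σ, hσ⟩ := center_scalar ((hker _).mp hπan)
  set vA : Matrix (Fin 2) (Fin 2) K := ((a ^ m : GL (Fin 2) K) : Matrix (Fin 2) (Fin 2) K)
    with hvAdef
  have hvA : vA = va ^ m := by rw [hvAdef, Units.val_pow_eq_pow_val]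
  have hA2 : vA * vA = σ • 1 := by
    rw [hvA, ← pow_add, ← Units.val_pow_eq_pow_val]
    exact hσ
  have hAnotscalar : ∀ k : K, vA ≠ k • 1 := by
    intro k hk
    exact hgm (by rw [← hπam, hker]; exact scalar_mem_center hk)
  have hdA : vA.det = va.det ^ m := by rw [hvA, Matrix.det_pow]
  have htrA : vA.trace = 0 := by
    by_contra htA
    apply hAnotscalar ((vA.trace)⁻¹ * (σ + vA.det))
    have hCH := chFin2 vA
    rw [hA2] at hCH
    have h5 : vA.trace • vA = (σ + vA.det) • (1 : Matrix (Fin 2) (Fin 2) K) := by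
      rw [add_smul, hCH]
      abel
    have h6 := congrArg (fun X => (vA.trace)⁻¹ • X) h5
    simp only [smul_smul, inv_mul_cancel₀ htA, one_smul] at h6
    exact h6
  have hσd : σ = -vA.det := by
    have hCH := chFin2 vA
    rw [hA2, htrA, zero_smul, zero_sub] at hCH
    have h7 := congrFun (congrFun hCH 0) 0
    simpa [Matrix.smul_apply, Matrix.one_apply] using h7
  by_cases hchar : (-1 : K) = 1
  · -- characteristic 2 : contradiction
    exfalso
    have h2K : (2 : K) = 0 := by linear_combination -hchar
    obtain ⟨e, he⟩ := IsAlgClosed.exists_pow_nat_eq σ (n := 2) (by norm_num)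
    set N : Matrix (Fin 2) (Fin 2) K := vA + e • 1 with hNdef
    have hN2 : N * N = 0 := by
      have expand : N * N = (vA * vA + (e * e) • 1) + (e • vA + e • vA) := by
        rw [hNdef]
        simp only [mul_add, add_mul, mul_smul_comm, smul_mul_assoc, mul_one, one_mul, smul_add, smul_smul]
        abel
      have hee : σ + e * e = 0 := by linear_combination he + σ * h2K
      have he2 : e + e = 0 := by linear_combination e * h2K
      rw [expand, hA2, ← add_smul, hee, zero_smul, ← add_smul, he2, zero_smul, add_zero]
    have hNne : N ≠ 0 := by
      intro h0
      rw [hNdef] at h0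
      exact hAnotscalar (-e) (by rw [neg_smul]; exact eq_neg_of_add_eq_zero_left h0)
    have hcomm : va * vA = vA * va := by
      rw [hvA]
      exact ((Commute.refl va).pow_right m).eq
    have hcN : va * N = N * va := by
      rw [hNdef, mul_add, add_mul, mul_smul_comm, smul_mul_assoc, mul_one, one_mul, hcomm]
    obtain ⟨κ, hκ⟩ := commNilp h2K hNne hN2 hcN
    apply hg2
    rw [← hπa2, hker]
    apply scalar_mem_center (k := κ)
    rw [Units.val_pow_eq_pow_val, pow_two]
    exact hκ
  · -- characteristic ≠ 2 : produce -1 in H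
    have hdm_ne : va.det ^ m ≠ 0 := pow_ne_zero _ hdne
    have hwinv : ((w⁻¹ : GL (Fin 2) K) : Matrix (Fin 2) (Fin 2) K) = (va.det)⁻¹ • 1 := by
      apply unit_inv_val_eq
      rw [hω, hωd, Matrix.smul_mul, one_mul, smul_smul, mul_inv_cancel₀ hdne, one_smul]
    have hzval : ((a ^ (m + m) * w⁻¹ ^ m : GL (Fin 2) K) : Matrix (Fin 2) (Fin 2) K)
        = (-1 : K) • 1 := by
      rw [Units.val_mul, hσ, Units.val_pow_eq_pow_val, hwinv, smul_pow, one_pow,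
        Matrix.smul_mul, Matrix.mul_smul, smul_smul, mul_one]
      congr 1
      rw [hσd, hdA, inv_pow, neg_mul, mul_inv_cancel₀ hdm_ne]
    refine ⟨a ^ (m + m) * w⁻¹ ^ m, ?_, ?_, ?_, ?_⟩
    · exact H.mul_mem (H.pow_mem haH _) (H.pow_mem (H.inv_mem hwH) _)
    · exact scalar_mem_center hzval
    · have hz2 : (a ^ (m + m) * w⁻¹ ^ m) ^ 2 = 1 := by
        apply Units.ext
        rw [Units.val_pow_eq_pow_val, pow_two, hzval, Matrix.smul_mul, Matrix.mul_smul,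
          smul_smul, one_mul, Units.val_one]
        norm_num
      have hzne : (a ^ (m + m) * w⁻¹ ^ m) ≠ 1 := by
        intro h1
        rw [h1, Units.val_one] at hzval
        have h8 := congrFun (congrFun hzval 0) 0
        simp [Matrix.smul_apply, Matrix.one_apply] at h8
        exact hchar (by linear_combination -h8)
      exact orderOf_eq_prime hz2 hzne
    · have hπz : π (a ^ (m + m) * w⁻¹ ^ m) = 1 :=
        (hker _).mpr (scalar_mem_center hzval)
      rw [hπdef] at hπz
      rw [hπz]
      exact Subgroup.one_mem _
end

section
/- Let O be a complete discrete valuation ring with uniformizer ϖ and residue field 𝔽, and let M = O/(ϖⁿ)·e₁ ⊕ O/(ϖʳ)·e₂ with r ≤ n be an O-module with an action of a group G by O-linear automorphisms. Suppose the induced representation of G on M/ϖM ≅ 𝔽² is such that the image of the group algebra 𝔽[G] in End_𝔽(M/ϖM) is all of End_𝔽(M/ϖM). Then r = n. -/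
/-- Let `O` be a complete DVR with uniformizer `ϖ` and residue field `𝔽`, and
`M = O/(ϖⁿ) ⊕ O/(ϖʳ)` (with `r ≤ n`) an `O`-module with `O`-linear `G`-action such that the
image of the group ring in the endomorphisms of `M/ϖM ≅ 𝔽²` spans all of `End(M/ϖM)`.
Then `r = n`. -/
theorem stmt6 (O : Type) [CommRing O] [IsDomain O] [IsDiscreteValuationRing O]
    [IsAdicComplete (IsLocalRing.maximalIdeal O) O]
    (ϖ : O) (hϖ : Irreducible ϖ) (n r : ℕ) (hr : 0 < r) (hrn : r ≤ n)
    (G : Type) [Group G] (M : Type) [AddCommGroup M] [Module O M]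
    (e : M ≃ₗ[O] (O ⧸ Ideal.span {ϖ ^ n}) × (O ⧸ Ideal.span {ϖ ^ r}))
    (ρ : G →* (M ≃ₗ[O] M))
    (N : Submodule O M) (hN : N = Ideal.span {ϖ} • (⊤ : Submodule O M))
    (hfull : Submodule.span O
      {φ : Module.End O (M ⧸ N) | ∃ g : G, ∀ m : M,
        φ (Submodule.Quotient.mk m) = Submodule.Quotient.mk (ρ g m)} = ⊤) :
    r = n := by
  rcases eq_or_lt_of_le hrn with h | hlt
  · exact h
  exfalso
  have hϖ0 : ϖ ≠ 0 := hϖ.ne_zero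
  set T : Submodule O M := Submodule.torsionBy O M (ϖ ^ r) with hT
  set L : Submodule O (M ⧸ N) := T.map N.mkQ with hL
  -- every endomorphism preserves L
  have hall : ∀ φ : Module.End O (M ⧸ N), ∀ x ∈ L, φ x ∈ L := by
    intro φ
    have hφ : φ ∈ Submodule.span O {φ : Module.End O (M ⧸ N) | ∃ g : G, ∀ m : M,
        φ (Submodule.Quotient.mk m) = Submodule.Quotient.mk (ρ g m)} := by
      rw [hfull]; exact Submodule.mem_top
    induction hφ using Submodule.span_induction with
    | mem ψ hψ =>
      obtain ⟨g, hg⟩ := hψ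
      intro x hx
      rcases Submodule.mem_map.mp hx with ⟨m, hm, rfl⟩
      rw [Submodule.mkQ_apply, hg m]
      refine Submodule.mem_map.mpr ⟨ρ g m, ?_, rfl⟩
      rw [Submodule.mem_torsionBy_iff] at hm ⊢
      rw [← map_smul, hm, map_zero]
    | zero => intro x hx; simp
    | add ψ ψ' _ _ h1 h2 => intro x hx; exact L.add_mem (h1 x hx) (h2 x hx)
    | smul c ψ _ h1 => intro x hx; exact L.smul_mem c (h1 x hx)
  -- build the endomorphism ψ : (mk m) ↦ (second coord of e m mod ϖ) • mk (e.symm (1,0))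
  have hle : Ideal.span {ϖ ^ r} ≤ Submodule.comap (LinearMap.id (R := O) (M := O)) (Ideal.span {ϖ}) := by
    simpa using Ideal.span_singleton_le_span_singleton.mpr (dvd_pow_self ϖ hr.ne')
  let red : (O ⧸ Ideal.span {ϖ ^ r}) →ₗ[O] O ⧸ Ideal.span {ϖ} :=
    Submodule.mapQ _ _ LinearMap.id hle
  let π₂ : M →ₗ[O] O ⧸ Ideal.span {ϖ} :=
    red ∘ₗ (LinearMap.snd O _ _) ∘ₗ e.toLinearMap
  have hker : N ≤ LinearMap.ker π₂ := by
    rw [hN]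
    refine Submodule.smul_le.mpr ?_
    intro c hc m _
    rw [LinearMap.mem_ker, map_smul]
    obtain ⟨y, hy⟩ := Submodule.Quotient.mk_surjective (Ideal.span {ϖ}) (π₂ m)
    rw [← hy, ← Submodule.Quotient.mk_smul, Submodule.Quotient.mk_eq_zero]
    exact Ideal.mul_mem_right y _ hc
  let ψbar : (M ⧸ N) →ₗ[O] O ⧸ Ideal.span {ϖ} := Submodule.liftQ N π₂ hker
  let v : M ⧸ N := Submodule.Quotient.mk (e.symm (1, 0))
  have hker2 : Ideal.span {ϖ} ≤ LinearMap.ker (LinearMap.toSpanSingleton O (M ⧸ N) v) := by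
    intro c hc
    rw [LinearMap.mem_ker, LinearMap.toSpanSingleton_apply]
    show c • Submodule.Quotient.mk _ = 0
    rw [← Submodule.Quotient.mk_smul, Submodule.Quotient.mk_eq_zero, hN]
    exact Submodule.smul_mem_smul hc trivial
  let ι : (O ⧸ Ideal.span {ϖ}) →ₗ[O] M ⧸ N :=
    Submodule.liftQ _ (LinearMap.toSpanSingleton O (M ⧸ N) v) hker2
  let ψ : Module.End O (M ⧸ N) := ι ∘ₗ ψbar
  -- x₀ ∈ L
  have htors : e.symm (0, 1) ∈ T := by
    rw [Submodule.mem_torsionBy_iff, ← map_smul]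
    have : (ϖ ^ r : O) • ((0 : O ⧸ Ideal.span {ϖ ^ n}), (1 : O ⧸ Ideal.span {ϖ ^ r})) = 0 := by
      ext
      · simp
      · show (ϖ ^ r : O) • (1 : O ⧸ Ideal.span {ϖ ^ r}) = 0
        have : (1 : O ⧸ Ideal.span {ϖ ^ r}) = Submodule.Quotient.mk 1 := rfl
        rw [this, ← Submodule.Quotient.mk_smul, Submodule.Quotient.mk_eq_zero]
        simpa using Ideal.mem_span_singleton_self (ϖ ^ r)
    rw [this, map_zero]
  have hx₀ : (Submodule.Quotient.mk (e.symm (0, 1)) : M ⧸ N) ∈ L :=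
    Submodule.mem_map.mpr ⟨e.symm (0, 1), htors, rfl⟩
  -- ψ x₀ = mk (e.symm (1,0))
  have hψx₀ : ψ (Submodule.Quotient.mk (e.symm (0, 1))) = v := by
    show ι (ψbar (Submodule.Quotient.mk (e.symm (0, 1)))) = v
    have h1 : ψbar (Submodule.Quotient.mk (e.symm (0, 1))) = (1 : O ⧸ Ideal.span {ϖ}) := by
      show π₂ (e.symm (0, 1)) = 1
      show red ((e (e.symm (0, 1))).2) = 1
      rw [e.apply_symm_apply]
      show red (Submodule.Quotient.mk 1) = 1
      rw [Submodule.mapQ_apply]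
      rfl
    rw [h1]
    show (LinearMap.toSpanSingleton O (M ⧸ N) v) 1 = v
    simp
  -- v ∉ L
  have hnotin : v ∉ L := by
    intro hmem
    rcases Submodule.mem_map.mp hmem with ⟨m, hm, hmk⟩
    rw [Submodule.mem_torsionBy_iff] at hm
    have hsub : m - e.symm (1, 0) ∈ N := (Submodule.Quotient.eq N).mp hmk
    have hrep : ∀ x ∈ N, ∃ y : M, ϖ • y = x := by
      rw [hN]; intro x hx
      refine Submodule.smul_induction_on hx ?_ ?_
      · intro c hc mm _
        obtain ⟨d, hd⟩ := Ideal.mem_span_singleton.mp hc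
        exact ⟨d • mm, by rw [smul_smul, ← hd]⟩
      · rintro x y ⟨a, rfl⟩ ⟨b, rfl⟩; exact ⟨a + b, by rw [smul_add]⟩
    obtain ⟨y, hy⟩ := hrep _ hsub
    -- first coordinates
    have hfst : ϖ • (e y).1 = (e m).1 - 1 := by
      have h := congrArg (fun z => (e z).1) hy
      simp only [map_smul, map_sub, e.apply_symm_apply] at h
      exact h
    have htor1 : (ϖ ^ r : O) • (e m).1 = 0 := by
      have := congrArg (fun z => (e z).1) hm
      simpa [map_smul] using this
    obtain ⟨a, ha⟩ := Submodule.Quotient.mk_surjective _ ((e m).1)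
    obtain ⟨c, hc⟩ := Submodule.Quotient.mk_surjective _ ((e y).1)
    -- ϖ ∣ a
    have hdvd_a : ϖ ∣ a := by
      rw [← ha, ← Submodule.Quotient.mk_smul, Submodule.Quotient.mk_eq_zero] at htor1
      rw [Ideal.mem_span_singleton, smul_eq_mul] at htor1
      obtain ⟨d, hd⟩ := htor1
      have hpow : ϖ ^ n = ϖ ^ r * ϖ ^ (n - r) := by
        rw [← pow_add, Nat.add_sub_cancel' hrn]
      rw [hpow, mul_assoc] at hd
      have : a = ϖ ^ (n - r) * d := mul_left_cancel₀ (pow_ne_zero r hϖ0) hd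
      exact this ▸ Dvd.dvd.mul_right (dvd_pow_self ϖ (Nat.sub_ne_zero_of_lt hlt)) d
    -- ϖ ∣ 1
    have h1 : (1 : O ⧸ Ideal.span {ϖ ^ n}) = Submodule.Quotient.mk 1 := rfl
    rw [← ha, ← hc, ← Submodule.Quotient.mk_smul, h1, ← Submodule.Quotient.mk_sub] at hfst
    have hmem1 : ϖ • c - (a - 1) ∈ Ideal.span {ϖ ^ n} :=
      (Submodule.Quotient.eq _).mp hfst
    rw [Ideal.mem_span_singleton, smul_eq_mul] at hmem1
    obtain ⟨k, hk⟩ := hmem1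
    have hdvd1 : ϖ ∣ 1 := by
      have : (1 : O) = ϖ ^ n * k - ϖ * c + a := by linear_combination hk
      rw [this]
      exact dvd_add (dvd_sub (Dvd.dvd.mul_right (dvd_pow_self ϖ (by omega)) k)
        (Dvd.dvd.mul_right dvd_rfl c)) hdvd_a
    exact hϖ.not_isUnit (isUnit_of_dvd_one hdvd1)
  exact hnotin (hψx₀ ▸ hall ψ _ hx₀)
end
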